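/- Let p be a prime and let t, e be positive integers with p > t + e. Then C(p, t, 1/e) = t, where for nonnegative integers t, m, d_t(m) denotes the least common multiple of all integers expressible as a product of at most t pairwise distinct positive integers each at most m, and for a real number r > 0, C(p,t,r) = max{ m ∈ ℤ_{≥0} : m·r − v_p(d_t(m)) ≤ max_{0≤i≤t} ( i·r − v_p(i!) ) }, with v_p the p-adic valuation on the integers. -/

import Mathlib

/-- `d_t(m)`: the least common multiple of all products of at most `t` pairwise
distinct positive integers that are at most `m` (the empty product is `1`). -/
def dLcm (t m : ℕ) : ℕ :=
  Finset.lcm (((Finset.Icc 1 m).powerset).filter (fun A => A.card ≤ t))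
    (fun A => ∏ a ∈ A, a)

lemma dLcm_dvd_factorial (t m : ℕ) : dLcm t m ∣ m.factorial := by
  apply Finset.lcm_dvd
  intro A hA
  simp only [Finset.mem_filter, Finset.mem_powerset] at hA
  calc ∏ a ∈ A, a ∣ ∏ a ∈ Finset.Icc 1 m, a :=
        Finset.prod_dvd_prod_of_subset _ _ _ hA.1
    _ = m.factorial := by
        rw [← Finset.Ico_add_one_right_eq_Icc, Finset.prod_Ico_id_eq_factorial]

lemma padicValNat_factorial_eq_zero {p m : ℕ} [Fact p.Prime] (h : m < p) :
    padicValNat p m.factorial = 0 := by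
  apply padicValNat.eq_zero_of_not_dvd
  intro hdvd
  exact absurd ((Nat.Prime.dvd_factorial (Fact.out)).mp hdvd) (not_le.mpr h)

theorem lenstra_C_eq (p t e : ℕ) [Fact p.Prime] (ht : 1 ≤ t) (he : 1 ≤ e)
    (hpte : t + e < p) :
    ((t : ℝ) * (1 / e) - (padicValNat p (dLcm t t) : ℝ) ≤
      Finset.sup' (Finset.range (t + 1)) Finset.nonempty_range_add_one
        (fun i => (i : ℝ) * (1 / e) - (padicValNat p (Nat.factorial i) : ℝ))) ∧
    (∀ m : ℕ, ((m : ℝ) * (1 / e) - (padicValNat p (dLcm t m) : ℝ) ≤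
        Finset.sup' (Finset.range (t + 1)) Finset.nonempty_range_add_one
          (fun i => (i : ℝ) * (1 / e) - (padicValNat p (Nat.factorial i) : ℝ))) →
      m ≤ t) := by
  have hp : p.Prime := Fact.out
  have he0 : (0 : ℝ) < (e : ℝ) := by exact_mod_cast he
  have htp : t < p := lt_of_le_of_lt (Nat.le_add_right t e) hpte
  -- the sup equals t/e
  have hsup : Finset.sup' (Finset.range (t + 1)) Finset.nonempty_range_add_one
      (fun i => (i : ℝ) * (1 / e) - (padicValNat p (Nat.factorial i) : ℝ))
      = (t : ℝ) * (1 / e) := by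
    apply le_antisymm
    · apply Finset.sup'_le
      intro i hi
      simp only [Finset.mem_range, Nat.lt_succ_iff] at hi
      have : (i : ℝ) * (1 / e) ≤ (t : ℝ) * (1 / e) := by
        apply mul_le_mul_of_nonneg_right (by exact_mod_cast hi)
        positivity
      have hv : (0 : ℝ) ≤ (padicValNat p (Nat.factorial i) : ℝ) := by positivity
      linarith
    · have hm : t ∈ Finset.range (t + 1) := Finset.self_mem_range_succ t
      have := Finset.le_sup' (f := fun i : ℕ => (i : ℝ) * (1 / e) -
        (padicValNat p (Nat.factorial i) : ℝ)) hm
      rwa [padicValNat_factorial_eq_zero htp, Nat.cast_zero, sub_zero] at this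
  constructor
  · rw [hsup]
    have : (0 : ℝ) ≤ (padicValNat p (dLcm t t) : ℝ) := by positivity
    linarith
  · intro m hm
    rw [hsup] at hm
    set v := padicValNat p (dLcm t m) with hv
    -- v ≤ padicValNat p m!
    have hvle : v ≤ padicValNat p m.factorial := by
      rw [← padicValNat_dvd_iff_le (Nat.factorial_ne_zero m)]
      exact dvd_trans pow_padicValNat_dvd (dLcm_dvd_factorial t m)
    -- m ≤ t + e * v
    have hmtev : m ≤ t + e * v := by
      have h1 : (m : ℝ) ≤ (t : ℝ) + (e : ℝ) * (v : ℝ) := by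
        have h2 := mul_le_mul_of_nonneg_right hm (le_of_lt he0)
        have hee : (1 / (e : ℝ)) * (e : ℝ) = 1 := one_div_mul_cancel (ne_of_gt he0)
        nlinarith
      exact_mod_cast (by push_cast; linarith : (m : ℝ) ≤ ((t + e * v : ℕ) : ℝ))
    -- Legendre bound: (p-1) * padicValNat p m! ≤ m - 1 when 1 ≤ m
    by_contra hcon
    push_neg at hcon
    have hm1 : 1 ≤ m := le_trans ht (le_of_lt hcon)
    have hleg : (p - 1) * padicValNat p m.factorial ≤ m - 1 := by
      rw [sub_one_mul_padicValNat_factorial]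
      have hd : 1 ≤ (p.digits m).sum := by
        have hne : p.digits m ≠ [] := Nat.digits_ne_nil_iff_ne_zero.mpr (by omega)
        have hlast := Nat.getLast_digit_ne_zero p (show m ≠ 0 by omega)
        have hmem := List.getLast_mem hne
        have := List.single_le_sum (fun x (_ : x ∈ p.digits m) => Nat.zero_le x) _ hmem
        omega
      omega
    have hpe : t + e ≤ p - 1 := by omega
    have key : (t + e) * v ≤ m - 1 :=
      le_trans (Nat.mul_le_mul hpe hvle) hleg
    -- now: t*v + e*v ≤ m - 1 ≤ t + e*v - 1, so t*v ≤ t - 1, so v = 0, so m ≤ t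
    have hv0 : v = 0 := by
      by_contra hvne
      have hv1 : 1 ≤ v := Nat.one_le_iff_ne_zero.mpr hvne
      have h3 : t * v + e * v ≤ m - 1 := by rw [add_mul] at key; exact key
      have h4 : t ≤ t * v := Nat.le_mul_of_pos_right t hv1
      set A := t * v
      set B := e * v
      omega
    rw [hv0, mul_zero, add_zero] at hmtev
    exact absurd hmtev (not_le.mpr hcon)
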